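/- Let n ≥ 1 and let g : ℝ^n → ℝ satisfy g(0) = 0 and g(λx + (1−λ)x') = λ g(x) + (1−λ) g(x') for every λ ∈ [0,1] and all comonotonic vectors x, x' ∈ ℝ^n. Then g = C_v, the signed Choquet integral with respect to the signed capacity v on [n] defined by v(S) = g(1_S), where 1_S is the characteristic vector of S. -/

import Mathlib

open Finset

/-- The Choquet-type sum computed with a given permutation `π`:
`∑ i (v({π(i),…,π(n)}) − v({π(i+1),…,π(n)})) x_{π(i)}`. -/
noncomputable def choquetSum {n : ℕ} (v : Finset (Fin n) → ℝ) (π : Equiv.Perm (Fin n))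
    (x : Fin n → ℝ) : ℝ :=
  ∑ i : Fin n,
    (v ((Finset.univ.filter fun k => i ≤ k).image π) -
      v ((Finset.univ.filter fun k => i < k).image π)) * x (π i)

/-- The signed (discrete) Choquet integral of `x` w.r.t. the set function `v`,
computed with a sorting permutation of `x`. -/
noncomputable def signedChoquet {n : ℕ} (v : Finset (Fin n) → ℝ) (x : Fin n → ℝ) : ℝ :=
  choquetSum v (Tuple.sort x) x

/-- Two vectors are comonotonic. -/
def Comonotone' {n : ℕ} (x x' : Fin n → ℝ) : Prop :=
  ∀ i j, 0 ≤ (x i - x j) * (x' i - x' j)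

/-- Characteristic (indicator) vector of `S`. -/
def indVec {n : ℕ} (S : Finset (Fin n)) : Fin n → ℝ := fun i => if i ∈ S then 1 else 0

/-- The unanimity game `v_S`. -/
def unanimity {n : ℕ} (S T : Finset (Fin n)) : ℝ := if S ⊆ T then 1 else 0

/-- The Möbius transform of a set function. -/
noncomputable def mobius {n : ℕ} (v : Finset (Fin n) → ℝ) (S : Finset (Fin n)) : ℝ :=
  ∑ T ∈ S.powerset, (-1 : ℝ) ^ (S.card - T.card) * v T

section Aux

variable {n : ℕ} (g : (Fin n → ℝ) → ℝ)

/-- Positive homogeneity. -/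
lemma aux_hom (h0 : g 0 = 0)
    (hcomb : ∀ x x' : Fin n → ℝ, Comonotone' x x' →
      ∀ t : ℝ, 0 ≤ t → t ≤ 1 →
        g (fun i => t * x i + (1 - t) * x' i) = t * g x + (1 - t) * g x') :
    ∀ (x : Fin n → ℝ) (t : ℝ), 0 ≤ t → g (fun i => t * x i) = t * g x := by
  have key : ∀ (x : Fin n → ℝ) (t : ℝ), 0 ≤ t → t ≤ 1 →
      g (fun i => t * x i) = t * g x := by
    intro x t ht ht1
    have hc : Comonotone' x 0 := by
      intro i j; simp
    have := hcomb x 0 hc t ht ht1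
    simpa [h0] using this
  intro x t ht
  rcases le_or_gt t 1 with h1 | h1
  · exact key x t ht h1
  · have htpos : 0 < t := lt_trans one_pos h1
    have h1t : (0:ℝ) ≤ 1 / t := by positivity
    have h1t1 : 1 / t ≤ 1 := by
      rw [div_le_one htpos]; linarith
    have := key (fun i => t * x i) (1 / t) h1t h1t1
    have heq : (fun i => 1 / t * (t * x i)) = x := by
      funext i; field_simp
    rw [heq] at this
    have : g (fun i => t * x i) = t * g x := by
      field_simp at this; linarith [this]
    exact this

/-- Comonotonic additivity. -/
lemma aux_add (h0 : g 0 = 0)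
    (hcomb : ∀ x x' : Fin n → ℝ, Comonotone' x x' →
      ∀ t : ℝ, 0 ≤ t → t ≤ 1 →
        g (fun i => t * x i + (1 - t) * x' i) = t * g x + (1 - t) * g x') :
    ∀ (x y : Fin n → ℝ), Comonotone' x y →
      g (fun i => x i + y i) = g x + g y := by
  intro x y hc
  have h1 := hcomb x y hc (1/2) (by norm_num) (by norm_num)
  have h2 := aux_hom g h0 hcomb (fun i => x i + y i) (1/2) (by norm_num)
  have heq : (fun i => (1:ℝ)/2 * (x i + y i)) = fun i => 1/2 * x i + (1 - 1/2) * y i := by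
    funext i; ring
  rw [heq] at h2
  rw [h1] at h2
  linarith

end Aux

theorem eq_signedChoquet_of_affineComb {n : ℕ} (hn : 1 ≤ n)
    (g : (Fin n → ℝ) → ℝ) (h0 : g 0 = 0)
    (hcomb : ∀ x x' : Fin n → ℝ, Comonotone' x x' →
      ∀ t : ℝ, 0 ≤ t → t ≤ 1 →
        g (fun i => t * x i + (1 - t) * x' i) = t * g x + (1 - t) * g x') :
    ∀ x : Fin n → ℝ, g x = signedChoquet (fun S => g (indVec S)) x := by
  have hom := aux_hom g h0 hcomb
  have hadd := aux_add g h0 hcomb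
  -- comonotonicity of constants
  have hconst : ∀ (z : Fin n → ℝ) (c : ℝ), Comonotone' z (fun _ => c) := by
    intro z c i j; simp
  -- g of a constant vector
  have hgc : ∀ c : ℝ, 0 ≤ c → g (fun _ => c) = c * g (fun _ => 1) := by
    intro c hc
    have := hom (fun _ => 1) c hc
    simpa using this
  -- shift lemma
  have hshift : ∀ (z : Fin n → ℝ) (c : ℝ),
      g (fun j => z j + c) = g z + c * g (fun _ => 1) := by
    intro z c
    rcases le_or_gt 0 c with hc | hc
    · have := hadd z (fun _ => c) (hconst z c)
      rw [hgc c hc] at this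
      exact this
    · have h1 := hadd (fun j => z j + c) (fun _ => -c) (hconst _ _)
      have heq : (fun j => (z j + c) + -c) = z := by funext j; ring
      rw [heq, hgc (-c) (by linarith)] at h1
      linarith
  intro x
  set π := Tuple.sort x with hπ
  have hmono : Monotone (x ∘ π) := Tuple.monotone_sort x
  -- sets in the chain, indexed by ℕ
  set F : ℕ → (Fin n → ℝ) :=
    fun k => indVec ((Finset.univ.filter fun j : Fin n => k ≤ (j : ℕ)).image π) with hF
  set V : ℕ → ℝ := fun k => g (F k) with hV
  -- membership characterization
  have hFval : ∀ (k : ℕ) (j : Fin n), F k j = if k ≤ ((π.symm j : Fin n) : ℕ) then 1 else 0 := by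
    intro k j
    have hmem : j ∈ (Finset.univ.filter fun t : Fin n => k ≤ (t : ℕ)).image π ↔
        k ≤ ((π.symm j : Fin n) : ℕ) := by
      constructor
      · rintro h
        rw [Finset.mem_image] at h
        obtain ⟨a, ha, rfl⟩ := h
        rw [Finset.mem_filter] at ha
        simpa using ha.2
      · intro h
        rw [Finset.mem_image]
        exact ⟨π.symm j, by simpa [Finset.mem_filter] using h, Equiv.apply_symm_apply π j⟩
    simp only [hF, indVec]
    by_cases h : k ≤ ((π.symm j : Fin n) : ℕ)
    · rw [if_pos (hmem.mpr h), if_pos h]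
    · rw [if_neg (fun hh => h (hmem.mp hh)), if_neg h]
  -- F k is monotone along π
  have hFmono : ∀ k, Monotone (fun p : Fin n => F k (π p)) := by
    intro k p q hpq
    show F k (π p) ≤ F k (π q)
    rw [hFval, hFval]
    simp only [Equiv.symm_apply_apply]
    by_cases hk : k ≤ (p : ℕ)
    · rw [if_pos hk, if_pos (le_trans hk hpq)]
    · rw [if_neg hk]
      split <;> norm_num
  -- two vectors monotone along π are comonotone
  have hcomono : ∀ z z' : Fin n → ℝ, Monotone (fun p : Fin n => z (π p)) →
      Monotone (fun p : Fin n => z' (π p)) → Comonotone' z z' := by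
    intro z z' hz hz' i j
    have hi : π (π.symm i) = i := Equiv.apply_symm_apply π i
    have hj : π (π.symm j) = j := Equiv.apply_symm_apply π j
    rcases le_total (π.symm i) (π.symm j) with h | h
    · have h1 : z i ≤ z j := by rw [← hi, ← hj]; exact hz h
      have h2 : z' i ≤ z' j := by rw [← hi, ← hj]; exact hz' h
      exact mul_nonneg_of_nonpos_of_nonpos (by linarith) (by linarith)
    · have h1 : z j ≤ z i := by rw [← hi, ← hj]; exact hz h
      have h2 : z' j ≤ z' i := by rw [← hi, ← hj]; exact hz' h
      exact mul_nonneg (by linarith) (by linarith)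
  -- key additivity for nonneg combinations of π-monotone vectors
  have hsumg : ∀ (w : ℕ → Fin n → ℝ), (∀ k, Monotone (fun p : Fin n => w k (π p))) →
      ∀ (d : ℕ → ℝ), (∀ k, 0 ≤ d k) → ∀ m,
      g (fun j => ∑ k ∈ Finset.range m, d k * w k j) =
        ∑ k ∈ Finset.range m, d k * g (w k) := by
    intro w hw d hd m
    induction m with
    | zero => simpa using (show g (fun _ => (0:ℝ)) = 0 from h0)
    | succ m ih =>
      have hMsum : Monotone (fun p : Fin n => ∑ k ∈ Finset.range m, d k * w k (π p)) := by
        intro p q hpq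
        exact Finset.sum_le_sum fun k _ => mul_le_mul_of_nonneg_left (hw k hpq) (hd k)
      have hMlast : Monotone (fun p : Fin n => d m * w m (π p)) := by
        intro p q hpq
        exact mul_le_mul_of_nonneg_left (hw m hpq) (hd m)
      have hc : Comonotone' (fun j => ∑ k ∈ Finset.range m, d k * w k j)
          (fun j => d m * w m j) := hcomono _ _ hMsum hMlast
      have h1 := hadd _ _ hc
      have heq : (fun j => (∑ k ∈ Finset.range m, d k * w k j) + d m * w m j) =
          fun j => ∑ k ∈ Finset.range (m+1), d k * w k j := by
        funext j; rw [Finset.sum_range_succ]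
      rw [heq] at h1
      rw [h1, ih, hom (w m) (d m) (hd m), Finset.sum_range_succ]
  -- the sorted values, extended to ℕ
  set W : ℕ → ℝ := fun k => x (π ⟨min k (n-1), by omega⟩) with hW
  have hWmono : Monotone W := by
    intro k l hkl
    exact hmono (show (⟨min k (n-1), by omega⟩ : Fin n) ≤ ⟨min l (n-1), by omega⟩ from
      Fin.mk_le_mk.mpr (min_le_min hkl le_rfl))
  have hWi : ∀ i : Fin n, W (i : ℕ) = x (π i) := by
    intro i
    have hmin : (⟨min (i : ℕ) (n-1), by have := i.isLt; omega⟩ : Fin n) = i :=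
      Fin.ext (by have := i.isLt; simp only; omega)
    show x (π ⟨min (i : ℕ) (n-1), by have := i.isLt; omega⟩) = x (π i)
    rw [hmin]
  set Z : ℕ → ℝ := fun k => if k = 0 then 0 else W (k-1) with hZ
  have hZsucc : ∀ k, Z (k+1) = W k := by intro k; simp [hZ]
  set c : ℕ → ℝ := fun k => Z (k+1) - Z k with hc
  have hcnn : ∀ k, 0 ≤ c (k+1) := by
    intro k
    show 0 ≤ Z (k+1+1) - Z (k+1)
    rw [hZsucc, hZsucc]
    have := hWmono (Nat.le_succ k)
    linarith
  -- decomposition of x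
  have hdecomp : ∀ j : Fin n, x j = ∑ k ∈ Finset.range n, c k * F k j := by
    intro j
    have hr : ((π.symm j : Fin n) : ℕ) < n := (π.symm j).isLt
    have hstep : ∀ k, c k * F k j = if k ≤ ((π.symm j : Fin n) : ℕ) then c k else 0 := by
      intro k
      rw [hFval]
      split <;> simp
    have hsub : Finset.range (((π.symm j : Fin n) : ℕ) + 1) ⊆ Finset.range n :=
      Finset.range_subset_range.mpr (by omega)
    have hzero : ∀ k ∈ Finset.range n, k ∉ Finset.range (((π.symm j : Fin n) : ℕ) + 1) →
        (if k ≤ ((π.symm j : Fin n) : ℕ) then c k else 0) = 0 := by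
      intro k hk hk2
      rw [Finset.mem_range] at hk2
      exact if_neg (by omega)
    symm
    calc ∑ k ∈ Finset.range n, c k * F k j
        = ∑ k ∈ Finset.range (((π.symm j : Fin n) : ℕ) + 1), c k := by
          rw [Finset.sum_congr rfl fun k _ => hstep k, ← Finset.sum_subset hsub hzero]
          exact Finset.sum_congr rfl fun k hk => if_pos (by
            rw [Finset.mem_range] at hk; omega)
      _ = Z (((π.symm j : Fin n) : ℕ) + 1) - Z 0 := Finset.sum_range_sub Z _
      _ = x j := by
          rw [hZsucc, hWi (π.symm j), Equiv.apply_symm_apply]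
          simp [hZ]
  -- Abel summation
  have habel : ∀ m, ∑ k ∈ Finset.range m, (V k - V (k+1)) * W k =
      (∑ k ∈ Finset.range m, c k * V k) - V m * Z m + V 0 * Z 0 := by
    intro m
    induction m with
    | zero => simp
    | succ m ih =>
      rw [Finset.sum_range_succ, ih, Finset.sum_range_succ]
      simp only [hc, hZsucc]
      ring
  -- V n = 0
  have hVn : V n = 0 := by
    have hFn : F n = 0 := by
      funext j
      have hlt := (π.symm j).isLt
      rw [hFval, Pi.zero_apply, if_neg (by omega)]
    show g (F n) = 0
    rw [hFn, h0]
  have hZ0 : Z 0 = 0 := by simp [hZ]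
  -- rewrite signedChoquet
  have hRHS : signedChoquet (fun S => g (indVec S)) x =
      ∑ k ∈ Finset.range n, (V k - V (k+1)) * W k := by
    rw [signedChoquet, choquetSum, ← Fin.sum_univ_eq_sum_range
      (fun k => (V k - V (k+1)) * W k) n]
    apply Finset.sum_congr rfl
    intro i _
    have e1 : (Finset.univ.filter fun k => i ≤ k) =
        (Finset.univ.filter fun j : Fin n => (i : ℕ) ≤ (j : ℕ)) := by
      apply Finset.filter_congr
      intro k _
      exact Iff.rfl
    have e2 : (Finset.univ.filter fun k => i < k) =
        (Finset.univ.filter fun j : Fin n => (i : ℕ) + 1 ≤ (j : ℕ)) := by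
      apply Finset.filter_congr
      intro k _
      exact Iff.rfl
    rw [← hπ, e1, e2, ← hWi i]
  -- rewrite g x
  have hn1 : n - 1 + 1 = n := by omega
  have hx : x = fun j => (∑ k ∈ Finset.range (n-1), c (k+1) * F (k+1) j) + c 0 := by
    funext j
    rw [hdecomp j, ← hn1, Finset.sum_range_succ']
    congr 1
    have hF0 : F 0 j = 1 := by
      rw [hFval]; simp
    rw [hF0]; ring
  have hone : (fun _ : Fin n => (1:ℝ)) = F 0 := by
    funext j
    rw [hFval]; simp
  have hsplit : (∑ k ∈ Finset.range n, c k * V k) =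
      (∑ k ∈ Finset.range (n-1), c (k+1) * V (k+1)) + c 0 * V 0 := by
    conv_lhs => rw [← hn1]
    rw [Finset.sum_range_succ']
  have hLHS : g x = ∑ k ∈ Finset.range n, c k * V k := by
    rw [hx, hshift, hsumg (fun k => F (k+1)) (fun k => hFmono (k+1))
      (fun k => c (k+1)) hcnn (n-1), hone, hsplit]
  rw [hLHS, hRHS, habel n, hVn, hZ0]
  ring
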